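/- Let a < 0, c > 0, b ∈ ℝ, and f(m) = a·m² + b·m + c·log(m²) for m ≠ 0. If b < 0 then the global maximizer of f over ℝ \ {0} is m̄ = (-b + √(b² - 16ac))/(4a). -/

import Mathlib

/-- If a < 0, c > 0 and b < 0, then m̄ = (-b + √(b² - 16ac))/(4a) is the (unique)
global maximizer of f(m) = a m² + b m + c log(m²) over ℝ \ {0}. -/
theorem stmt1 (a b c : ℝ) (ha : a < 0) (hc : 0 < c) (hb : b < 0) :
    let f : ℝ → ℝ := fun m => a * m ^ 2 + b * m + c * Real.log (m ^ 2)
    let m₁ : ℝ := (-b + Real.sqrt (b ^ 2 - 16 * a * c)) / (4 * a)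
    m₁ ≠ 0 ∧ (∀ m : ℝ, m ≠ 0 → f m ≤ f m₁) ∧
      (∀ m : ℝ, m ≠ 0 → f m = f m₁ → m = m₁) := by
  intro f m₁
  have hfd : ∀ x : ℝ, f x = a * x ^ 2 + b * x + c * Real.log (x ^ 2) := fun x => rfl
  set s : ℝ := Real.sqrt (b ^ 2 - 16 * a * c) with hs
  have hD : 0 < b ^ 2 - 16 * a * c := by nlinarith
  have hs0 : 0 < s := Real.sqrt_pos.mpr hD
  have hs2 : s ^ 2 = b ^ 2 - 16 * a * c := Real.sq_sqrt hD.le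
  have ha4 : 4 * a < 0 := by linarith
  have hm1def : m₁ = (-b + s) / (4 * a) := rfl
  have hm1neg : m₁ < 0 := by
    rw [hm1def]
    apply div_neg_of_pos_of_neg _ ha4
    have hsb : -b < s := by
      apply lt_of_pow_lt_pow_left₀ 2 hs0.le
      nlinarith
    linarith
  have hm1ne : m₁ ≠ 0 := ne_of_lt hm1neg
  have hroot : 2 * a * m₁ ^ 2 + b * m₁ + 2 * c = 0 := by
    rw [hm1def]
    have h4 : (4 : ℝ) * a ≠ 0 := ne_of_lt ha4
    have ha0 : a ≠ 0 := ne_of_lt ha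
    field_simp
    nlinarith [hs2]
  -- derivative
  have hf : ∀ x : ℝ, x ≠ 0 → HasDerivAt f (2 * a * x + b + 2 * c / x) x := by
    intro x hx
    have hx2 : x ^ 2 ≠ 0 := pow_ne_zero 2 hx
    have h1 : HasDerivAt (fun m : ℝ => m ^ 2) (2 * x) x := by
      simpa using hasDerivAt_pow 2 x
    have h2 : HasDerivAt (fun m : ℝ => Real.log (m ^ 2)) (2 * x / x ^ 2) x := h1.log hx2
    have h3 : HasDerivAt f (a * (2 * x) + b * 1 + c * (2 * x / x ^ 2)) x := by
      exact ((h1.const_mul a).add ((hasDerivAt_id x).const_mul b)).add (h2.const_mul c)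
    convert h3 using 1
    field_simp
  -- sign of derivative
  have hquadneg : ∀ x : ℝ, x < m₁ → 2 * a * x ^ 2 + b * x + 2 * c < 0 := by
    intro x hx
    have hx0 : x < 0 := hx.trans hm1neg
    nlinarith [mul_pos (neg_pos.mpr hm1neg) (neg_pos.mpr hx0), mul_pos (neg_pos.mpr ha) (mul_pos (neg_pos.mpr hm1neg) (neg_pos.mpr hx0))]
  have hquadpos : ∀ x : ℝ, m₁ < x → x < 0 → 0 < 2 * a * x ^ 2 + b * x + 2 * c := by
    intro x hx hx0
    nlinarith [mul_pos (neg_pos.mpr hm1neg) (neg_pos.mpr hx0), mul_pos (neg_pos.mpr ha) (mul_pos (neg_pos.mpr hm1neg) (neg_pos.mpr hx0))]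
  have hdpos : ∀ x : ℝ, x < m₁ → 0 < 2 * a * x + b + 2 * c / x := by
    intro x hx
    have hx0 : x < 0 := hx.trans hm1neg
    have hx0' : x ≠ 0 := ne_of_lt hx0
    have heq : 2 * a * x + b + 2 * c / x = (2 * a * x ^ 2 + b * x + 2 * c) / x := by
      field_simp
    rw [heq]
    exact div_pos_of_neg_of_neg (hquadneg x hx) hx0
  have hdneg : ∀ x : ℝ, m₁ < x → x < 0 → 2 * a * x + b + 2 * c / x < 0 := by
    intro x hx hx0
    have hx0' : x ≠ 0 := ne_of_lt hx0
    have heq : 2 * a * x + b + 2 * c / x = (2 * a * x ^ 2 + b * x + 2 * c) / x := by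
      field_simp
    rw [heq]
    exact div_neg_of_pos_of_neg (hquadpos x hx hx0) hx0
  -- monotonicity
  have hmono : StrictMonoOn f (Set.Iic m₁) := by
    apply strictMonoOn_of_deriv_pos (convex_Iic m₁)
    · intro x hx
      have hx0 : x ≠ 0 := ne_of_lt (lt_of_le_of_lt (Set.mem_Iic.mp hx) hm1neg)
      exact (hf x hx0).continuousAt.continuousWithinAt
    · intro x hx
      rw [interior_Iic] at hx
      have hx0 : x ≠ 0 := ne_of_lt (hx.trans hm1neg)
      rw [(hf x hx0).deriv]
      exact hdpos x hx
  have hanti : StrictAntiOn f (Set.Ico m₁ 0) := by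
    apply strictAntiOn_of_deriv_neg (convex_Ico m₁ 0)
    · intro x hx
      have hx0 : x ≠ 0 := ne_of_lt hx.2
      exact (hf x hx0).continuousAt.continuousWithinAt
    · intro x hx
      rw [interior_Ico] at hx
      have hx0 : x ≠ 0 := ne_of_lt hx.2
      rw [(hf x hx0).deriv]
      exact hdneg x hx.1 hx.2
  -- key strict inequality on negatives
  have keyNeg : ∀ m : ℝ, m < 0 → m ≠ m₁ → f m < f m₁ := by
    intro m hm0 hmne
    rcases lt_or_gt_of_ne hmne with hlt | hgt
    · exact hmono (Set.mem_Iic.mpr hlt.le) (Set.mem_Iic.mpr le_rfl) hlt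
    · exact hanti (Set.mem_Ico.mpr ⟨le_rfl, hm1neg⟩) (Set.mem_Ico.mpr ⟨hgt.le, hm0⟩) hgt
  have key : ∀ m : ℝ, m ≠ 0 → m ≠ m₁ → f m < f m₁ := by
    intro m hm0 hmne
    rcases lt_trichotomy m 0 with hneg | h0 | hpos
    · exact keyNeg m hneg hmne
    · exact absurd h0 hm0
    · have h1 : f m = f (-m) + 2 * b * m := by
        rw [hfd, hfd]
        have hsq : (-m) ^ 2 = m ^ 2 := by ring
        rw [hsq]; ring
      have h2 : f (-m) ≤ f m₁ := by
        rcases eq_or_ne (-m) m₁ with he | hne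
        · rw [he]
        · exact (keyNeg (-m) (by linarith) hne).le
      have h3 : 2 * b * m < 0 := mul_neg_of_neg_of_pos (by linarith) hpos
      linarith
  refine ⟨hm1ne, fun m hm0 => ?_, fun m hm0 hfeq => ?_⟩
  · rcases eq_or_ne m m₁ with he | hne
    · rw [he]
    · exact (key m hm0 hne).le
  · by_contra hne
    exact absurd hfeq (ne_of_lt (key m hm0 hne))
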